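/- Let G be a finite bipartite simple graph and v a vertex of G. Then the undirected edge geography position (G, v) is a P-position if and only if v belongs to some even kernel of G. -/

import Mathlib

/-- P-positions of undirected edge geography on the edge set `F` with root `v`:
every move (removing an edge `s(v,w) ∈ F` and moving the root to `w`)
leads to a position that is not a P-position. -/
def UegPPos {V : Type} [DecidableEq V] (F : Finset (Sym2 V)) (v : V) : Prop :=
  ∀ w : V, ∀ h : s(v, w) ∈ F, ¬ UegPPos (F.erase s(v, w)) w
termination_by F.card
decreasing_by exact Finset.card_erase_lt_of_mem h

/-- N-positions of undirected edge geography: some move leads to a P-position. -/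
def UegNPos {V : Type} [DecidableEq V] (F : Finset (Sym2 V)) (v : V) : Prop :=
  ∃ w : V, ∃ _ : s(v, w) ∈ F, UegPPos (F.erase s(v, w)) w

/-- The grid graph `G_{m×n}`: the vertex `(i, j)` of the grid (with `1 ≤ i ≤ m`,
`1 ≤ j ≤ n`) is encoded as the pair `(⟨i-1, _⟩, ⟨j-1, _⟩) : Fin m × Fin n`;
two vertices `(i,j)` and `(i',j')` are adjacent iff `|i-i'| + |j-j'| = 1`. -/
def gridGraph (m n : ℕ) : SimpleGraph (Fin m × Fin n) where
  Adj p q := ((p.1.val : ℤ) - q.1.val).natAbs + ((p.2.val : ℤ) - q.2.val).natAbs = 1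
  symm := ⟨by intro p q h; omega⟩
  loopless := ⟨by intro p h; omega⟩

instance (m n : ℕ) : DecidableRel (gridGraph m n).Adj := fun p q =>
  inferInstanceAs
    (Decidable (((p.1.val : ℤ) - q.1.val).natAbs + ((p.2.val : ℤ) - q.2.val).natAbs = 1))

/-- An even kernel of a simple graph: a nonempty independent set `S` such that every
vertex not in `S` has an even number of neighbors in `S`. -/
def IsEvenKernel {V : Type} (G : SimpleGraph V) (S : Set V) : Prop :=
  S.Nonempty ∧ (∀ u ∈ S, ∀ w ∈ S, ¬ G.Adj u w) ∧
    ∀ u, u ∉ S → Even {w | w ∈ S ∧ G.Adj u w}.ncard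

open Finset

/-- The core invariant lemma: if `S` is a set of vertices such that no edge of `F`
joins two vertices of `S`, every vertex outside `S` has an even number of `F`-edges
into `S`, and the root lies in `S`, then the position is a P-position. -/
lemma ueg_main {V : Type} [DecidableEq V] (S : Finset V) :
    ∀ F : Finset (Sym2 V),
      (∀ a ∈ S, ∀ b ∈ S, s(a,b) ∉ F) →
      (∀ u, u ∉ S → Even ((S.filter (fun s => s(u,s) ∈ F)).card)) →
      ∀ r ∈ S, UegPPos F r := by
  intro F
  induction F using Finset.strongInduction with
  | _ F ih =>
    intro hind hpar r hr
    rw [UegPPos]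
    intro w hw hP
    have hwS : w ∉ S := fun hwS => hind r hr w hwS hw
    have hwr : w ≠ r := fun h => hwS (h ▸ hr)
    set F1 := F.erase s(r,w) with hF1
    have hrmem : r ∈ S.filter (fun s => s(w,s) ∈ F) := by
      simp only [mem_filter]
      exact ⟨hr, by rwa [Sym2.eq_swap]⟩
    have hfilt1 : S.filter (fun s => s(w,s) ∈ F1) = (S.filter (fun s => s(w,s) ∈ F)).erase r := by
      ext s
      simp only [mem_filter, mem_erase, hF1]
      constructor
      · rintro ⟨hsS, hne, hmem⟩
        refine ⟨fun hsr => hne ?_, hsS, hmem⟩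
        subst hsr; rw [Sym2.eq_swap]
      · rintro ⟨hne, hsS, hmem⟩
        refine ⟨hsS, ?_, hmem⟩
        intro heq
        rcases Sym2.eq_iff.1 heq with ⟨h1, h2⟩ | ⟨h1, h2⟩
        · exact hwr h1
        · exact hne h2
    have hodd : Odd ((S.filter (fun s => s(w,s) ∈ F1)).card) := by
      rw [hfilt1, Finset.card_erase_of_mem hrmem]
      exact Nat.Even.sub_odd (Finset.card_pos.2 ⟨r, hrmem⟩) (hpar w hwS) odd_one
    obtain ⟨s', hs'⟩ := Finset.card_pos.1 (Nat.pos_of_ne_zero (by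
      intro h0; rw [h0] at hodd; exact (Nat.not_odd_iff_even.2 Even.zero) hodd))
    have hs'S : s' ∈ S := (mem_filter.1 hs').1
    have hs'F1 : s(w,s') ∈ F1 := (mem_filter.1 hs').2
    have hws' : w ≠ s' := fun h => hwS (h ▸ hs'S)
    set F2 := F1.erase s(w,s') with hF2
    have hF2F : F2 ⊂ F :=
      Finset.ssubset_of_subset_of_ssubset (Finset.erase_subset _ _) (Finset.erase_ssubset hw)
    have hind2 : ∀ a ∈ S, ∀ b ∈ S, s(a,b) ∉ F2 := by
      intro a ha b hb hmem
      exact hind a ha b hb (hF2F.1 hmem)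
    have hpar2 : ∀ u, u ∉ S → Even ((S.filter (fun s => s(u,s) ∈ F2)).card) := by
      intro u huS
      by_cases huw : u = w
      · subst huw
        have hfilt2 : S.filter (fun s => s(u,s) ∈ F2)
            = (S.filter (fun s => s(u,s) ∈ F1)).erase s' := by
          ext s
          simp only [mem_filter, mem_erase, hF2]
          constructor
          · rintro ⟨hsS, hne, hmem⟩
            exact ⟨fun hss' => hne (by rw [hss']), hsS, hmem⟩
          · rintro ⟨hne, hsS, hmem⟩
            refine ⟨hsS, ?_, hmem⟩
            intro heq
            rcases Sym2.eq_iff.1 heq with ⟨h1, h2⟩ | ⟨h1, h2⟩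
            · exact hne h2
            · exact hws' h1
        rw [hfilt2, Finset.card_erase_of_mem hs']
        exact Nat.Odd.sub_odd hodd odd_one
      · have hur : u ≠ r := fun h => huS (h ▸ hr)
        have hus' : u ≠ s' := fun h => huS (h ▸ hs'S)
        have hfilt2 : S.filter (fun s => s(u,s) ∈ F2) = S.filter (fun s => s(u,s) ∈ F) := by
          ext s
          simp only [mem_filter, hF2, hF1, Finset.mem_erase]
          constructor
          · rintro ⟨hsS, _, _, hmem⟩; exact ⟨hsS, hmem⟩
          · rintro ⟨hsS, hmem⟩
            refine ⟨hsS, ?_, ?_, hmem⟩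
            · intro heq
              rcases Sym2.eq_iff.1 heq with ⟨h1, _⟩ | ⟨h1, _⟩
              · exact huw h1
              · exact hus' h1
            · intro heq
              rcases Sym2.eq_iff.1 heq with ⟨h1, _⟩ | ⟨h1, _⟩
              · exact hur h1
              · exact huw h1
        rw [hfilt2]
        exact hpar u huS
    have hPP : UegPPos F2 s' := ih F2 hF2F hind2 hpar2 s' hs'S
    rw [UegPPos] at hP
    exact hP s' hs'F1 hPP

lemma zmod2_cases : ∀ z : ZMod 2, z = 0 ∨ z = 1 := by decide

lemma cast_zmod2_eq_zero_iff (n : ℕ) : ((n : ZMod 2) = 0) ↔ Even n := by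
  rw [ZMod.natCast_eq_zero_iff]
  exact ⟨fun h => even_iff_two_dvd.2 h, fun h => even_iff_two_dvd.1 h⟩

lemma fin2_eq : ∀ x y z : Fin 2, x ≠ z → y ≠ z → x = y := by decide

section LA
variable {V : Type} [Fintype V] [DecidableEq V]

/-- Functions supported on `{u | P u}`. -/
def suppSub (P : V → Prop) : Submodule (ZMod 2) (V → ZMod 2) where
  carrier := {x | ∀ u, ¬ P u → x u = 0}
  add_mem' := by intro a b ha hb u hu; simp [ha u hu, hb u hu]
  zero_mem' := by intro u hu; rfl
  smul_mem' := by intro r x hx u hu; simp [hx u hu]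

omit [Fintype V] [DecidableEq V] in
lemma mem_suppSub {P : V → Prop} {x : V → ZMod 2} : x ∈ suppSub P ↔ ∀ u, ¬ P u → x u = 0 :=
  Iff.rfl

/-- If the `GF(2)` system for an even kernel containing `v` has no solution, then by duality
there is a dual witness `y` supported on the other color class. -/
lemma la_test (G : SimpleGraph V) [DecidableRel G.Adj] (c : G.Coloring (Fin 2)) (v : V)
    (hno : ∀ x : V → ZMod 2, x ∈ suppSub (fun u => c u = c v) →
      Matrix.mulVecLin (G.adjMatrix (ZMod 2)) x = 0 → x v = 0) :
    ∃ y : V → ZMod 2, ∀ a : V, c a = c v →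
      ((Finset.univ.filter (fun u => (¬ c u = c v ∧ y u = 1) ∧ G.Adj u a)).card : ZMod 2)
        = if a = v then 1 else 0 := by
  classical
  set M : (V → ZMod 2) →ₗ[ZMod 2] (V → ZMod 2) := Matrix.mulVecLin (G.adjMatrix (ZMod 2)) with hM
  have hφ : (LinearMap.proj v : Module.Dual (ZMod 2) (V → ZMod 2)) ∈
      Submodule.dualAnnihilator (suppSub (fun u => c u = c v) ⊓ LinearMap.ker M) := by
    rw [Submodule.mem_dualAnnihilator]
    intro x hx
    rw [Submodule.mem_inf, LinearMap.mem_ker] at hx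
    exact hno x hx.1 hx.2
  rw [Subspace.dualAnnihilator_inf_eq, ← LinearMap.range_dualMap_eq_dualAnnihilator_ker,
    Submodule.mem_sup] at hφ
  obtain ⟨ψ, hψ, χ, hχ, hsum⟩ := hφ
  obtain ⟨η, rfl⟩ := hχ
  set y : V → ZMod 2 := fun u => η (fun j => if u = j then 1 else 0) with hy
  refine ⟨y, fun a ha => ?_⟩
  set xa : V → ZMod 2 := fun j => if a = j then 1 else 0 with hxa
  have hxaU : xa ∈ suppSub (fun u => c u = c v) := by
    intro u hu
    have : a ≠ u := fun h => hu (h ▸ ha)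
    simp [hxa, this]
  have hev := LinearMap.congr_fun hsum xa
  have hψ0 : ψ xa = 0 := (Submodule.mem_dualAnnihilator ψ).1 hψ xa hxaU
  have hMxa : M xa = fun u => G.adjMatrix (ZMod 2) u a := by
    funext u
    simp [hM, Matrix.mulVecLin_apply, Matrix.mulVec, dotProduct, hxa,
      mul_ite, mul_one, mul_zero]
  have hηM : η (M xa) = ∑ u, (G.adjMatrix (ZMod 2) u a) * y u := by
    rw [hMxa, LinearMap.pi_apply_eq_sum_univ η]
    refine Finset.sum_congr rfl (fun u _ => ?_)
    rw [smul_eq_mul, hy]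
  have hterm : ∀ u, (G.adjMatrix (ZMod 2) u a) * y u
      = if (¬ c u = c v ∧ y u = 1) ∧ G.Adj u a then 1 else 0 := by
    intro u
    by_cases hadj : G.Adj u a
    · have hcu : ¬ c u = c v := by
        rw [← ha]; exact c.valid hadj
      rcases zmod2_cases (y u) with h0 | h1
      · simp [SimpleGraph.adjMatrix_apply, hadj, h0, hcu]
      · simp [SimpleGraph.adjMatrix_apply, hadj, h1, hcu]
    · simp [SimpleGraph.adjMatrix_apply, hadj]
  have hsum2 : η (M xa) =
      ((Finset.univ.filter (fun u => (¬ c u = c v ∧ y u = 1) ∧ G.Adj u a)).card : ZMod 2) := by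
    rw [hηM, Finset.sum_congr rfl (fun u _ => hterm u)]
    exact Finset.sum_boole _ _
  have hxav : xa v = if a = v then 1 else 0 := by simp [hxa]
  rw [LinearMap.add_apply, hψ0, LinearMap.dualMap_apply, hsum2, zero_add,
    LinearMap.proj_apply] at hev
  rw [hev, hxav]

end LA

/-- For a finite bipartite simple graph `G` and a vertex `v`,
the UEG position `(G, v)` is a P-position iff `v` lies in some even kernel of `G`. -/
theorem ueg_ppos_iff_evenKernel_of_bipartite {V : Type} [Fintype V] [DecidableEq V]
    (G : SimpleGraph V) [DecidableRel G.Adj] (hbip : G.Colorable 2) (v : V) :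
    UegPPos G.edgeFinset v ↔ ∃ S : Set V, IsEvenKernel G S ∧ v ∈ S := by
  classical
  constructor
  · intro hP
    by_contra hno
    push_neg at hno
    obtain ⟨c⟩ := hbip
    have hno' : ∀ x : V → ZMod 2, x ∈ suppSub (fun u => c u = c v) →
        Matrix.mulVecLin (G.adjMatrix (ZMod 2)) x = 0 → x v = 0 := by
      intro x hxU hxK
      by_contra hv
      have hxv : x v = 1 := (zmod2_cases (x v)).resolve_left hv
      have hcol : ∀ w, x w = 1 → c w = c v := by
        intro w hw
        by_contra h
        rw [mem_suppSub] at hxU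
        rw [hxU w h] at hw
        exact zero_ne_one hw
      refine hno {u | x u = 1} ⟨⟨v, hxv⟩, ?_, ?_⟩ hxv
      · intro u hu w hw hadj
        exact (c.valid hadj) ((hcol u hu).trans (hcol w hw).symm)
      · intro u huS
        by_cases hcu : c u = c v
        · have hempty : {w | w ∈ {u | x u = 1} ∧ G.Adj u w} = ∅ := by
            ext w
            simp only [Set.mem_setOf_eq, Set.mem_empty_iff_false, iff_false, not_and]
            intro hw1 hadj
            exact (c.valid hadj) (hcu.trans (hcol w hw1).symm)
          rw [hempty]
          simp
        · have h0 : (Matrix.mulVecLin (G.adjMatrix (ZMod 2)) x) u = 0 := by rw [hxK]; rfl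
          have hsum : ∑ j, (G.adjMatrix (ZMod 2)) u j * x j = 0 := by
            simpa [Matrix.mulVecLin_apply, Matrix.mulVec, dotProduct] using h0
          have hterm : ∀ j, (G.adjMatrix (ZMod 2)) u j * x j
              = if G.Adj u j ∧ x j = 1 then 1 else 0 := by
            intro j
            by_cases hadj : G.Adj u j
            · rcases zmod2_cases (x j) with h | h <;>
                simp [SimpleGraph.adjMatrix_apply, hadj, h]
            · simp [SimpleGraph.adjMatrix_apply, hadj]
          rw [Finset.sum_congr rfl (fun j _ => hterm j), Finset.sum_boole _ _] at hsum
          have hev : Even ((Finset.univ.filter fun j => G.Adj u j ∧ x j = 1).card) :=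
            (cast_zmod2_eq_zero_iff _).1 hsum
          have hset : {w | w ∈ {u | x u = 1} ∧ G.Adj u w}
              = ↑(Finset.univ.filter fun j => G.Adj u j ∧ x j = 1) := by
            ext w
            simp only [Set.mem_setOf_eq, Finset.coe_filter, Finset.mem_univ, true_and]
            tauto
          rw [hset, Set.ncard_coe_finset]
          exact hev
    obtain ⟨y, key⟩ := la_test G c v hno'
    set T : Finset V := Finset.univ.filter (fun b => ¬ c b = c v ∧ y b = 1) with hT
    have key' : ∀ a, c a = c v →
        ((T.filter (fun t => G.Adj a t)).card : ZMod 2) = if a = v then 1 else 0 := by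
      intro a ha
      have hfeq : T.filter (fun t => G.Adj a t)
          = Finset.univ.filter (fun u => (¬ c u = c v ∧ y u = 1) ∧ G.Adj u a) := by
        rw [hT, Finset.filter_filter]
        exact Finset.filter_congr (fun u _ => by rw [G.adj_comm])
      rw [hfeq, key a ha]
    have hmemT : ∀ t ∈ T, ¬ c t = c v := fun t ht => ((Finset.mem_filter.1 ht).2).1
    have hodd : Odd ((T.filter (fun t => G.Adj v t)).card) := by
      have h1 := key' v rfl
      rw [if_pos rfl] at h1
      rw [← Nat.not_even_iff_odd]
      intro hev
      have h0 := (cast_zmod2_eq_zero_iff _).2 hev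
      rw [h1] at h0
      exact one_ne_zero h0
    obtain ⟨t₀, ht₀⟩ := Finset.card_pos.1 (Nat.pos_of_ne_zero (by
      intro h0
      rw [h0] at hodd
      exact (Nat.not_odd_iff_even.2 Even.zero) hodd))
    have ht₀T : t₀ ∈ T := (Finset.mem_filter.1 ht₀).1
    have hadjvt₀ : G.Adj v t₀ := (Finset.mem_filter.1 ht₀).2
    have hct₀ : ¬ c t₀ = c v := hmemT t₀ ht₀T
    set F : Finset (Sym2 V) := G.edgeFinset.erase s(v,t₀) with hF
    have hcond1 : ∀ a ∈ T, ∀ b ∈ T, s(a,b) ∉ F := by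
      intro a ha b hb hmem
      have hadj : G.Adj a b := by
        have h := Finset.erase_subset _ _ hmem
        rwa [SimpleGraph.mem_edgeFinset, SimpleGraph.mem_edgeSet] at h
      exact (c.valid hadj) (fin2_eq _ _ _ (hmemT a ha) (hmemT b hb))
    have hcond2 : ∀ u, u ∉ T → Even ((T.filter (fun s => s(u,s) ∈ F)).card) := by
      intro u huT
      by_cases hcu : c u = c v
      · by_cases huv : u = v
        · subst huv
          have hfe : T.filter (fun s => s(u,s) ∈ F) = (T.filter (fun t => G.Adj u t)).erase t₀ := by
            ext t
            simp only [Finset.mem_filter, Finset.mem_erase, hF, Finset.mem_erase,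
              SimpleGraph.mem_edgeFinset, SimpleGraph.mem_edgeSet]
            constructor
            · rintro ⟨htT, hne, hadj⟩
              exact ⟨fun h => hne (by rw [h]), htT, hadj⟩
            · rintro ⟨hne, htT, hadj⟩
              refine ⟨htT, ?_, hadj⟩
              intro heq
              rcases Sym2.eq_iff.1 heq with ⟨_, h2⟩ | ⟨h1, _⟩
              · exact hne h2
              · exact hct₀ (by rw [← h1])
          rw [hfe, Finset.card_erase_of_mem (Finset.mem_filter.2 ⟨ht₀T, hadjvt₀⟩)]
          exact Nat.Odd.sub_odd hodd odd_one
        · have hut₀ : u ≠ t₀ := fun h => hct₀ (h ▸ hcu)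
          have hfe : T.filter (fun s => s(u,s) ∈ F) = T.filter (fun t => G.Adj u t) := by
            ext t
            simp only [Finset.mem_filter, Finset.mem_erase, hF, Finset.mem_erase,
              SimpleGraph.mem_edgeFinset, SimpleGraph.mem_edgeSet]
            constructor
            · rintro ⟨htT, _, hadj⟩; exact ⟨htT, hadj⟩
            · rintro ⟨htT, hadj⟩
              refine ⟨htT, ?_, hadj⟩
              intro heq
              rcases Sym2.eq_iff.1 heq with ⟨h1, _⟩ | ⟨h1, _⟩
              · exact huv h1
              · exact hut₀ h1
          rw [hfe]
          have h2 := key' u hcu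
          rw [if_neg huv] at h2
          exact (cast_zmod2_eq_zero_iff _).1 h2
      · have hfe : T.filter (fun s => s(u,s) ∈ F) = ∅ := by
          rw [Finset.filter_eq_empty_iff]
          intro t htT hmem
          have hadj : G.Adj u t := by
            have h := Finset.erase_subset _ _ hmem
            rwa [SimpleGraph.mem_edgeFinset, SimpleGraph.mem_edgeSet] at h
          exact (c.valid hadj) (fin2_eq _ _ _ hcu (hmemT t htT))
        rw [hfe]
        simp
    have hPP := ueg_main T F hcond1 hcond2 t₀ ht₀T
    rw [UegPPos] at hP
    exact hP t₀ (by rw [SimpleGraph.mem_edgeFinset, SimpleGraph.mem_edgeSet]; exact hadjvt₀) hPP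
  · rintro ⟨S, ⟨hne, hind, hpar⟩, hvS⟩
    have hSfin : S.Finite := Set.toFinite S
    set S' : Finset V := hSfin.toFinset with hS'
    have hmem : ∀ u, u ∈ S' ↔ u ∈ S := fun u => Set.Finite.mem_toFinset hSfin
    refine ueg_main S' G.edgeFinset ?_ ?_ v ((hmem v).2 hvS)
    · intro a ha b hb habF
      rw [SimpleGraph.mem_edgeFinset, SimpleGraph.mem_edgeSet] at habF
      exact hind a ((hmem a).1 ha) b ((hmem b).1 hb) habF
    · intro u huS'
      have huS : u ∉ S := fun h => huS' ((hmem u).2 h)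
      have hset : {w | w ∈ S ∧ G.Adj u w} = ↑(S'.filter (fun s => s(u,s) ∈ G.edgeFinset)) := by
        ext w
        simp only [Set.mem_setOf_eq, Finset.coe_filter, SimpleGraph.mem_edgeFinset,
          SimpleGraph.mem_edgeSet, hmem]
      have h := hpar u huS
      rwa [hset, Set.ncard_coe_finset] at h
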